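/- (Robbins–Siegmund) Let (Ω, 𝔉, ℙ) be a probability space with filtration (𝔉_k)_{k∈ℕ}. Let (α_k), (θ_k), (η_k), (χ_k) be sequences of nonnegative random variables, each α_k, θ_k, η_k, χ_k being 𝔉_k-measurable, such that Σ_k η_k < ∞ a.s., Σ_k χ_k < ∞ a.s., and for every k ∈ ℕ, E[α_{k+1} | 𝔉_k] + θ_k ≤ (1 + χ_k) α_k + η_k almost surely. Then Σ_k θ_k < ∞ almost surely, and (α_k) converges almost surely to a nonnegative random variable. -/

import Mathlib

open MeasureTheory Filter Finset Topology

section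
variable {Ωs : Type} {m0 : MeasurableSpace Ωs}

noncomputable def rsP (χ : ℕ → Ωs → ℝ) (k : ℕ) (ω : Ωs) : ℝ :=
  ∏ j ∈ Finset.range k, (1 + χ j ω)

def rsA (η χ : ℕ → Ωs → ℝ) (M : ℝ) (n : ℕ) : Set Ωs :=
  {ω | ∑ j ∈ Finset.range n, (η j ω + χ j ω) ≤ M}

noncomputable def rsc (η χ : ℕ → Ωs → ℝ) (M : ℝ) (k : ℕ) : Ωs → ℝ :=
  (rsA η χ M (k + 1)).indicator (fun ω => (rsP χ (k + 1) ω)⁻¹)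

noncomputable def rsα (α η χ : ℕ → Ωs → ℝ) (M : ℝ) (k : ℕ) : Ωs → ℝ :=
  (rsA η χ M k).indicator (fun ω => (rsP χ k ω)⁻¹ * α k ω)

noncomputable def rsX (α θ η χ : ℕ → Ωs → ℝ) (M : ℝ) (n : ℕ) : Ωs → ℝ := fun ω =>
  rsα α η χ M n ω + ∑ j ∈ Finset.range n, rsc η χ M j ω * θ j ω
    - ∑ j ∈ Finset.range n, rsc η χ M j ω * η j ω

-- basic facts about rsP
lemma rsP_pos {χ : ℕ → Ωs → ℝ} (hχ : ∀ k ω, 0 ≤ χ k ω) (k : ℕ) (ω : Ωs) :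
    0 < rsP χ k ω := by
  rw [rsP]; exact Finset.prod_pos fun j _ => by have := hχ j ω; linarith

lemma rsP_one_le {χ : ℕ → Ωs → ℝ} (hχ : ∀ k ω, 0 ≤ χ k ω) (k : ℕ) (ω : Ωs) :
    1 ≤ rsP χ k ω := by
  rw [rsP]
  calc (1:ℝ) = ∏ _j ∈ Finset.range k, (1:ℝ) := by simp
    _ ≤ ∏ j ∈ Finset.range k, (1 + χ j ω) :=
        Finset.prod_le_prod (by simp) (fun j _ => by have := hχ j ω; linarith)

lemma rsP_mono {χ : ℕ → Ωs → ℝ} (hχ : ∀ k ω, 0 ≤ χ k ω) (ω : Ωs) :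
    Monotone fun k => rsP χ k ω :=
  monotone_nat_of_le_succ fun k => by
    have h : rsP χ (k+1) ω = rsP χ k ω * (1 + χ k ω) := Finset.prod_range_succ _ _
    rw [h]
    nlinarith [rsP_pos hχ k ω, hχ k ω]

lemma rsP_succ (χ : ℕ → Ωs → ℝ) (k : ℕ) (ω : Ωs) :
    rsP χ (k + 1) ω = rsP χ k ω * (1 + χ k ω) := Finset.prod_range_succ _ _

lemma rsP_le_exp {χ : ℕ → Ωs → ℝ} (hχ : ∀ k ω, 0 ≤ χ k ω) {ω : Ωs}
    (hsum : Summable fun k => χ k ω) (k : ℕ) :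
    rsP χ k ω ≤ Real.exp (∑' j, χ j ω) := by
  rw [rsP]
  calc (∏ j ∈ Finset.range k, (1 + χ j ω)) ≤ ∏ j ∈ Finset.range k, Real.exp (χ j ω) :=
        Finset.prod_le_prod (fun j _ => by linarith [hχ j ω])
          (fun j _ => by have := Real.add_one_le_exp (χ j ω); linarith)
    _ = Real.exp (∑ j ∈ Finset.range k, χ j ω) := (Real.exp_sum _ _).symm
    _ ≤ _ := Real.exp_le_exp.2 (Summable.sum_le_tsum _ (fun j _ => hχ j ω) hsum)

lemma rsA_antitone (η χ : ℕ → Ωs → ℝ) (hη : ∀ k ω, 0 ≤ η k ω) (hχ : ∀ k ω, 0 ≤ χ k ω)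
    (M : ℝ) : Antitone (rsA η χ M) := by
  intro m n hmn ω hω
  simp only [rsA, Set.mem_setOf_eq] at hω ⊢
  refine le_trans (Finset.sum_le_sum_of_subset_of_nonneg (Finset.range_subset_range.2 hmn)
    (fun j _ _ => by have := hη j ω; have := hχ j ω; linarith)) hω

lemma rsc_nonneg {η χ : ℕ → Ωs → ℝ} (hχ : ∀ k ω, 0 ≤ χ k ω) (M : ℝ) (k : ℕ) (ω : Ωs) :
    0 ≤ rsc η χ M k ω :=
  Set.indicator_nonneg (fun ω _ => inv_nonneg.2 (rsP_pos hχ _ ω).le) ω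

lemma rsc_le_one {η χ : ℕ → Ωs → ℝ} (hχ : ∀ k ω, 0 ≤ χ k ω) (M : ℝ) (k : ℕ) (ω : Ωs) :
    rsc η χ M k ω ≤ 1 := by
  classical
  rw [rsc, Set.indicator]
  split
  · exact inv_le_one_of_one_le₀ (rsP_one_le hχ _ ω)
  · exact zero_le_one

lemma rsα_nonneg {α η χ : ℕ → Ωs → ℝ} (hα : ∀ k ω, 0 ≤ α k ω) (hχ : ∀ k ω, 0 ≤ χ k ω)
    (M : ℝ) (k : ℕ) (ω : Ωs) : 0 ≤ rsα α η χ M k ω :=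
  Set.indicator_nonneg (fun ω _ => mul_nonneg (inv_nonneg.2 (rsP_pos hχ _ ω).le) (hα k ω)) ω

lemma rsα_le {α η χ : ℕ → Ωs → ℝ} (hα : ∀ k ω, 0 ≤ α k ω) (hχ : ∀ k ω, 0 ≤ χ k ω)
    (M : ℝ) (k : ℕ) (ω : Ωs) : rsα α η χ M k ω ≤ α k ω := by
  classical
  rw [rsα, Set.indicator]
  split
  · have := mul_le_mul_of_nonneg_right (inv_le_one_of_one_le₀ (rsP_one_le hχ k ω)) (hα k ω)
    simpa using this
  · exact hα k ω

lemma rs_sum_eta_le {η χ : ℕ → Ωs → ℝ}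
    (hθ_nonneg : ∀ k ω, 0 ≤ η k ω) (hη_nonneg : ∀ k ω, 0 ≤ η k ω)
    (hχ_nonneg : ∀ k ω, 0 ≤ χ k ω) {M : ℝ} (hM : 0 ≤ M) (ω : Ωs) (n : ℕ) :
    ∑ j ∈ Finset.range n, rsc η χ M j ω * η j ω ≤ M := by
  classical
  induction n with
  | zero => simpa using hM
  | succ n ih =>
    by_cases hmem : ω ∈ rsA η χ M (n + 1)
    · have hle : ∀ j ∈ Finset.range (n + 1), rsc η χ M j ω * η j ω ≤ η j ω + χ j ω := by
        intro j _
        have h1 : rsc η χ M j ω * η j ω ≤ 1 * η j ω :=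
          mul_le_mul_of_nonneg_right (rsc_le_one hχ_nonneg M j ω) (hη_nonneg j ω)
        have := hχ_nonneg j ω
        linarith
      calc ∑ j ∈ Finset.range (n + 1), rsc η χ M j ω * η j ω
          ≤ ∑ j ∈ Finset.range (n + 1), (η j ω + χ j ω) := Finset.sum_le_sum hle
        _ ≤ M := hmem
    · have hc0 : rsc η χ M n ω = 0 := Set.indicator_of_notMem hmem _
      rw [Finset.sum_range_succ, hc0, zero_mul, add_zero]
      exact ih

lemma rs_aux {P : Measure Ωs} [IsProbabilityMeasure P] {ℱ : Filtration ℕ m0}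
    {α θ η χ : ℕ → Ωs → ℝ}
    (hα_nonneg : ∀ k ω, 0 ≤ α k ω) (hθ_nonneg : ∀ k ω, 0 ≤ θ k ω)
    (hη_nonneg : ∀ k ω, 0 ≤ η k ω) (hχ_nonneg : ∀ k ω, 0 ≤ χ k ω)
    (hα_adapted : Adapted ℱ α) (hθ_adapted : Adapted ℱ θ)
    (hη_adapted : Adapted ℱ η) (hχ_adapted : Adapted ℱ χ)
    (hα_int : ∀ k, Integrable (α k) P)
    (hrec : ∀ k, ∀ᵐ ω ∂P,
      (P[α (k + 1) | ℱ k]) ω + θ k ω ≤ (1 + χ k ω) * α k ω + η k ω)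
    (M : ℝ) (hM : 0 ≤ M) :
    ∀ᵐ ω ∂P, (∀ k, ∑ j ∈ Finset.range k, (η j ω + χ j ω) ≤ M) →
      (Summable fun k => (rsP χ (k + 1) ω)⁻¹ * θ k ω) ∧
      ∃ c, Tendsto (fun k => (rsP χ k ω)⁻¹ * α k ω) atTop (𝓝 c) := by
  classical
  -- measurability
  have hPmeas : ∀ k n, k ≤ n + 1 → Measurable[ℱ n] fun ω => (rsP χ k ω)⁻¹ := by
    intro k n hkn
    refine Measurable.inv ?_
    refine Finset.measurable_prod _ fun j hj => ?_
    have hj' : j ≤ n := by have := Finset.mem_range.1 hj; omega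
    exact measurable_const.add
      ((hχ_adapted j).mono (ℱ.mono hj') le_rfl)
  have hAmeas : ∀ n m, n ≤ m + 1 → MeasurableSet[ℱ m] (rsA η χ M n) := by
    intro n m hnm
    refine measurableSet_le (Finset.measurable_sum _ fun j hj => ?_) measurable_const
    have hj' : j ≤ m := by have := Finset.mem_range.1 hj; omega
    exact ((hη_adapted j).mono (ℱ.mono hj') le_rfl).add
      ((hχ_adapted j).mono (ℱ.mono hj') le_rfl)
  have hCmeas : ∀ k, StronglyMeasurable[ℱ k] (rsc η χ M k) := fun k =>
    ((hPmeas (k + 1) k le_rfl).indicator (hAmeas (k + 1) k le_rfl)).stronglyMeasurable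
  have hαmeas : ∀ k, StronglyMeasurable[ℱ k] (rsα α η χ M k) := fun k =>
    (((hPmeas k k k.le_succ).mul (hα_adapted k)).indicator
      (hAmeas k k k.le_succ)).stronglyMeasurable
  have hCθmeas : ∀ k, StronglyMeasurable[ℱ k] fun ω => rsc η χ M k ω * θ k ω := fun k =>
    (hCmeas k).mul (hθ_adapted k).stronglyMeasurable
  have hCηmeas : ∀ k, StronglyMeasurable[ℱ k] fun ω => rsc η χ M k ω * η k ω := fun k =>
    (hCmeas k).mul (hη_adapted k).stronglyMeasurable
  -- a.e. bound on θ used for integrability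
  have hEnonneg : ∀ k, 0 ≤ᵐ[P] P[α (k + 1) | ℱ k] := fun k =>
    condExp_nonneg (Filter.Eventually.of_forall fun ω => hα_nonneg (k + 1) ω)
  -- integrability
  have hα''_int : ∀ k, Integrable (rsα α η χ M k) P := by
    intro k
    refine Integrable.mono' (hα_int k) (((hαmeas k).mono (ℱ.le k)).aestronglyMeasurable) ?_
    refine Filter.Eventually.of_forall fun ω => ?_
    rw [Real.norm_eq_abs, abs_of_nonneg (rsα_nonneg hα_nonneg hχ_nonneg M k ω)]
    exact rsα_le hα_nonneg hχ_nonneg M k ω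
  have hηk_le : ∀ k ω, ω ∈ rsA η χ M (k + 1) → η k ω ≤ M ∧ χ k ω ≤ M := by
    intro k ω hmem
    constructor
    · calc η k ω ≤ η k ω + χ k ω := by have := hχ_nonneg k ω; linarith
        _ ≤ ∑ j ∈ Finset.range (k + 1), (η j ω + χ j ω) :=
          Finset.single_le_sum (f := fun j => η j ω + χ j ω) (fun j _ => by simpa using add_nonneg (hη_nonneg j ω) (hχ_nonneg j ω))
            (Finset.self_mem_range_succ k)
        _ ≤ M := hmem
    · calc χ k ω ≤ η k ω + χ k ω := by have := hη_nonneg k ω; linarith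
        _ ≤ ∑ j ∈ Finset.range (k + 1), (η j ω + χ j ω) :=
          Finset.single_le_sum (f := fun j => η j ω + χ j ω) (fun j _ => by simpa using add_nonneg (hη_nonneg j ω) (hχ_nonneg j ω))
            (Finset.self_mem_range_succ k)
        _ ≤ M := hmem
  have hCη_int : ∀ k, Integrable (fun ω => rsc η χ M k ω * η k ω) P := by
    intro k
    refine Integrable.mono' (integrable_const M)
      (((hCηmeas k).mono (ℱ.le k)).aestronglyMeasurable) ?_
    refine Filter.Eventually.of_forall fun ω => ?_
    have h0 : 0 ≤ rsc η χ M k ω * η k ω :=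
      mul_nonneg (rsc_nonneg hχ_nonneg M k ω) (hη_nonneg k ω)
    rw [Real.norm_eq_abs, abs_of_nonneg h0]
    by_cases hmem : ω ∈ rsA η χ M (k + 1)
    · have h1 : rsc η χ M k ω * η k ω ≤ 1 * η k ω :=
        mul_le_mul_of_nonneg_right (rsc_le_one hχ_nonneg M k ω) (hη_nonneg k ω)
      have := (hηk_le k ω hmem).1
      linarith
    · rw [rsc, Set.indicator_of_notMem hmem, zero_mul]; exact hM
  have hCθ_int : ∀ k, Integrable (fun ω => rsc η χ M k ω * θ k ω) P := by
    intro k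
    refine Integrable.mono' (((hα_int k).const_mul (1 + M)).add (integrable_const M))
      (((hCθmeas k).mono (ℱ.le k)).aestronglyMeasurable) ?_
    filter_upwards [hrec k, hEnonneg k] with ω hω hE
    simp only [Pi.zero_apply] at hE
    have h0 : 0 ≤ rsc η χ M k ω * θ k ω :=
      mul_nonneg (rsc_nonneg hχ_nonneg M k ω) (hθ_nonneg k ω)
    rw [Real.norm_eq_abs, abs_of_nonneg h0]
    simp only [Pi.add_apply]
    by_cases hmem : ω ∈ rsA η χ M (k + 1)
    · obtain ⟨hη', hχ'⟩ := hηk_le k ω hmem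
      have h1 : rsc η χ M k ω * θ k ω ≤ 1 * θ k ω :=
        mul_le_mul_of_nonneg_right (rsc_le_one hχ_nonneg M k ω) (hθ_nonneg k ω)
      have h2 : θ k ω ≤ (1 + χ k ω) * α k ω + η k ω := by linarith
      have h3 : (1 + χ k ω) * α k ω ≤ (1 + M) * α k ω :=
        mul_le_mul_of_nonneg_right (by linarith) (hα_nonneg k ω)
      linarith
    · rw [rsc, Set.indicator_of_notMem hmem, zero_mul]
      have := mul_nonneg (le_trans hM (le_refl M) : (0:ℝ) ≤ M) hM
      nlinarith [mul_nonneg (add_nonneg zero_le_one hM) (hα_nonneg k ω)]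
  have hSθ_int : ∀ n, Integrable (fun ω => ∑ j ∈ Finset.range n, rsc η χ M j ω * θ j ω) P :=
    fun n => integrable_finset_sum _ fun j _ => hCθ_int j
  have hSη_int : ∀ n, Integrable (fun ω => ∑ j ∈ Finset.range n, rsc η χ M j ω * η j ω) P :=
    fun n => integrable_finset_sum _ fun j _ => hCη_int j
  have hX_int : ∀ n, Integrable (rsX α θ η χ M n) P := fun n =>
    ((hα''_int n).add (hSθ_int n)).sub (hSη_int n)
  have hXadp : StronglyAdapted ℱ (rsX α θ η χ M) := by
    intro n
    refine StronglyMeasurable.sub (StronglyMeasurable.add (hαmeas n) ?_) ?_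
    · exact Finset.stronglyMeasurable_fun_sum _ fun j hj =>
        (hCθmeas j).mono (ℱ.mono (Finset.mem_range.1 hj).le)
    · exact Finset.stronglyMeasurable_fun_sum _ fun j hj =>
        (hCηmeas j).mono (ℱ.mono (Finset.mem_range.1 hj).le)
  -- α'' (k+1) = c k * α (k+1)
  have hα''succ : ∀ k, rsα α η χ M (k + 1) = fun ω => rsc η χ M k ω * α (k + 1) ω := by
    intro k
    funext ω
    by_cases hmem : ω ∈ rsA η χ M (k + 1)
    · rw [rsα, rsc, Set.indicator_of_mem hmem, Set.indicator_of_mem hmem]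
    · rw [rsα, rsc, Set.indicator_of_notMem hmem, Set.indicator_of_notMem hmem, zero_mul]
  -- condexp of α''
  have hcond_α'' : ∀ k, P[rsα α η χ M (k + 1) | ℱ k]
      =ᵐ[P] fun ω => rsc η χ M k ω * (P[α (k + 1) | ℱ k]) ω := by
    intro k
    rw [hα''succ k]
    have h := condExp_mul_of_stronglyMeasurable_left (hCmeas k)
      (by rw [show (rsc η χ M k * α (k+1)) = fun ω => rsc η χ M k ω * α (k + 1) ω from rfl,
        ← hα''succ k]; exact hα''_int (k + 1)) (hα_int (k + 1))
    exact h
  -- supermartingale inequality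
  have hXcond : ∀ k, P[rsX α θ η χ M (k + 1) | ℱ k] ≤ᵐ[P] rsX α θ η χ M k := by
    intro k
    have hdecomp : P[rsX α θ η χ M (k + 1) | ℱ k] =ᵐ[P]
        (fun ω => (P[rsα α η χ M (k + 1) | ℱ k]) ω
          + ∑ j ∈ Finset.range (k + 1), rsc η χ M j ω * θ j ω
          - ∑ j ∈ Finset.range (k + 1), rsc η χ M j ω * η j ω) := by
      have h1 : rsX α θ η χ M (k + 1) =
          (rsα α η χ M (k + 1) + fun ω => ∑ j ∈ Finset.range (k + 1), rsc η χ M j ω * θ j ω)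
          - fun ω => ∑ j ∈ Finset.range (k + 1), rsc η χ M j ω * η j ω := rfl
      rw [h1]
      refine (condExp_sub ((hα''_int (k + 1)).add (hSθ_int (k + 1))) (hSη_int (k + 1)) (ℱ k)).trans ?_
      have h2 := condExp_add (hα''_int (k + 1)) (hSθ_int (k + 1)) (m := ℱ k) (μ := P)
      have h3 : P[(fun ω => ∑ j ∈ Finset.range (k + 1), rsc η χ M j ω * θ j ω) | ℱ k]
          = fun ω => ∑ j ∈ Finset.range (k + 1), rsc η χ M j ω * θ j ω :=
        condExp_of_stronglyMeasurable (ℱ.le k)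
          (Finset.stronglyMeasurable_fun_sum _ fun j hj =>
            (hCθmeas j).mono (ℱ.mono (by have := Finset.mem_range.1 hj; omega)))
          (hSθ_int (k + 1))
      have h4 : P[(fun ω => ∑ j ∈ Finset.range (k + 1), rsc η χ M j ω * η j ω) | ℱ k]
          = fun ω => ∑ j ∈ Finset.range (k + 1), rsc η χ M j ω * η j ω :=
        condExp_of_stronglyMeasurable (ℱ.le k)
          (Finset.stronglyMeasurable_fun_sum _ fun j hj =>
            (hCηmeas j).mono (ℱ.mono (by have := Finset.mem_range.1 hj; omega)))
          (hSη_int (k + 1))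
      rw [h4]
      filter_upwards [h2] with ω hω
      simp only [Pi.sub_apply, Pi.add_apply] at hω ⊢
      rw [hω, h3]
    filter_upwards [hdecomp, hcond_α'' k, hrec k, hEnonneg k] with ω hdec hcα hr hE
    simp only [Pi.zero_apply] at hE
    rw [hdec, hcα]
    -- key pointwise inequality
    have hkey : rsc η χ M k ω * (P[α (k + 1) | ℱ k]) ω + rsc η χ M k ω * θ k ω
        ≤ rsα α η χ M k ω + rsc η χ M k ω * η k ω := by
      by_cases hmem : ω ∈ rsA η χ M (k + 1)
      · have hc : rsc η χ M k ω = (rsP χ (k + 1) ω)⁻¹ := Set.indicator_of_mem hmem _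
        have hmemk : ω ∈ rsA η χ M k :=
          rsA_antitone η χ hη_nonneg hχ_nonneg M k.le_succ hmem
        have hαk : rsα α η χ M k ω = (rsP χ k ω)⁻¹ * α k ω := Set.indicator_of_mem hmemk _
        have hPk : 0 < rsP χ k ω := rsP_pos hχ_nonneg k ω
        have hPk1 : 0 < rsP χ (k + 1) ω := rsP_pos hχ_nonneg (k + 1) ω
        have hprod : (rsP χ (k + 1) ω)⁻¹ * ((1 + χ k ω) * α k ω) = (rsP χ k ω)⁻¹ * α k ω := by
          rw [rsP_succ]
          have hχk : (0:ℝ) < 1 + χ k ω := by have := hχ_nonneg k ω; linarith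
          field_simp
        have hcnn : (0:ℝ) ≤ (rsP χ (k + 1) ω)⁻¹ := inv_nonneg.2 hPk1.le
        have := mul_le_mul_of_nonneg_left hr hcnn
        rw [hc, hαk, ← hprod]
        have hdist : (rsP χ (k + 1) ω)⁻¹ * ((1 + χ k ω) * α k ω + η k ω)
            = (rsP χ (k + 1) ω)⁻¹ * ((1 + χ k ω) * α k ω)
              + (rsP χ (k + 1) ω)⁻¹ * η k ω := by ring
        have hdist2 : (rsP χ (k + 1) ω)⁻¹ * ((P[α (k + 1) | ℱ k]) ω + θ k ω)
            = (rsP χ (k + 1) ω)⁻¹ * (P[α (k + 1) | ℱ k]) ω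
              + (rsP χ (k + 1) ω)⁻¹ * θ k ω := by ring
        rw [hdist, hdist2] at this
        linarith
      · have hc : rsc η χ M k ω = 0 := Set.indicator_of_notMem hmem _
        rw [hc]
        simp only [zero_mul, add_zero, zero_add]
        exact rsα_nonneg hα_nonneg hχ_nonneg M k ω
    rw [rsX]
    rw [Finset.sum_range_succ, Finset.sum_range_succ]
    linarith
  have hXsuper : Supermartingale (rsX α θ η χ M) ℱ P :=
    supermartingale_nat hXadp hX_int hXcond
  -- lower bound on X and L¹ bound
  have hXlb : ∀ n ω, -M ≤ rsX α θ η χ M n ω := by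
    intro n ω
    have h1 := rsα_nonneg (η := η) hα_nonneg hχ_nonneg M n ω
    have h2 : (0:ℝ) ≤ ∑ j ∈ Finset.range n, rsc η χ M j ω * θ j ω :=
      Finset.sum_nonneg fun j _ =>
        mul_nonneg (rsc_nonneg hχ_nonneg M j ω) (hθ_nonneg j ω)
    have h3 := rs_sum_eta_le hη_nonneg hη_nonneg hχ_nonneg hM ω n
    simp only [rsX]
    linarith
  have hXmean : ∀ n, ∫ ω, rsX α θ η χ M n ω ∂P ≤ ∫ ω, rsX α θ η χ M 0 ω ∂P := by
    intro n
    have h := hXsuper.2.1 0 n (Nat.zero_le n)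
    calc ∫ ω, rsX α θ η χ M n ω ∂P = ∫ ω, (P[rsX α θ η χ M n | ℱ 0]) ω ∂P :=
          (integral_condExp (ℱ.le 0) (f := rsX α θ η χ M n)).symm
      _ ≤ ∫ ω, rsX α θ η χ M 0 ω ∂P :=
          integral_mono_ae integrable_condExp (hX_int 0) h
  have hB : ∃ B : ℝ, ∀ n, ∫ ω, ‖rsX α θ η χ M n ω‖ ∂P ≤ B := by
    refine ⟨∫ ω, rsX α θ η χ M 0 ω ∂P + 2 * M, fun n => ?_⟩
    have habs : ∀ ω, ‖rsX α θ η χ M n ω‖ ≤ rsX α θ η χ M n ω + 2 * M := by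
      intro ω
      have := hXlb n ω
      rw [Real.norm_eq_abs]
      rcases abs_cases (rsX α θ η χ M n ω) with ⟨h1, _⟩ | ⟨h1, _⟩ <;> linarith
    calc ∫ ω, ‖rsX α θ η χ M n ω‖ ∂P ≤ ∫ ω, (rsX α θ η χ M n ω + 2 * M) ∂P :=
          integral_mono (hX_int n).norm ((hX_int n).add (integrable_const _))
            habs
      _ = ∫ ω, rsX α θ η χ M n ω ∂P + 2 * M := by
          rw [integral_add (hX_int n) (integrable_const _)]
          simp
      _ ≤ ∫ ω, rsX α θ η χ M 0 ω ∂P + 2 * M := by linarith [hXmean n]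
  obtain ⟨B, hBle⟩ := hB
  -- convergence of X
  have hXconv : ∀ᵐ ω ∂P, ∃ c, Tendsto (fun n => rsX α θ η χ M n ω) atTop (𝓝 c) := by
    have hsub : Submartingale (fun n => -(rsX α θ η χ M n)) ℱ P := hXsuper.neg
    have hbdd : ∀ n, eLpNorm (-(rsX α θ η χ M n)) 1 P ≤ ENNReal.ofReal B := by
      intro n
      rw [eLpNorm_neg]
      have h1 : eLpNorm (rsX α θ η χ M n) 1 P = ENNReal.ofReal (∫ ω, ‖rsX α θ η χ M n ω‖ ∂P) := by
        rw [eLpNorm_one_eq_lintegral_enorm,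
          ← ofReal_integral_norm_eq_lintegral_enorm (hX_int n)]
      rw [h1]
      exact ENNReal.ofReal_le_ofReal (hBle n)
    have := hsub.exists_ae_tendsto_of_bdd (R := (ENNReal.ofReal B).toNNReal) ?_
    · filter_upwards [this] with ω ⟨c, hc⟩
      exact ⟨-c, by simpa using hc.neg⟩
    · intro n
      refine le_trans (hbdd n) ?_
      rw [ENNReal.coe_toNNReal (by exact ENNReal.ofReal_ne_top)]
  -- conclusion
  filter_upwards [hXconv] with ω hXc hA
  obtain ⟨c, hc⟩ := hXc
  have hmem : ∀ n, ω ∈ rsA η χ M n := fun n => hA n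
  have hceq : ∀ k, rsc η χ M k ω = (rsP χ (k + 1) ω)⁻¹ := fun k =>
    Set.indicator_of_mem (hmem (k + 1)) _
  have hαeq : ∀ k, rsα α η χ M k ω = (rsP χ k ω)⁻¹ * α k ω := fun k =>
    Set.indicator_of_mem (hmem k) _
  -- partial sums of η'' converge (monotone, bounded)
  have hη''sum : Summable fun k => rsc η χ M k ω * η k ω := by
    refine summable_of_sum_range_le (c := M) (fun k =>
      mul_nonneg (rsc_nonneg hχ_nonneg M k ω) (hη_nonneg k ω)) (fun n => ?_)
    exact rs_sum_eta_le hη_nonneg hη_nonneg hχ_nonneg hM ω n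
  -- X bounded above along the sequence
  have hXbddAbove : ∃ C, ∀ n, rsX α θ η χ M n ω ≤ C := by
    obtain ⟨C, hC⟩ := hc.bddAbove_range
    exact ⟨C, fun n => hC ⟨n, rfl⟩⟩
  obtain ⟨C, hC⟩ := hXbddAbove
  have hθ''sum : Summable fun k => rsc η χ M k ω * θ k ω := by
    refine summable_of_sum_range_le (c := C + M) (fun k =>
      mul_nonneg (rsc_nonneg hχ_nonneg M k ω) (hθ_nonneg k ω)) (fun n => ?_)
    have h1 := rsα_nonneg (η := η) hα_nonneg hχ_nonneg M n ω
    have h3 := rs_sum_eta_le hη_nonneg hη_nonneg hχ_nonneg hM ω n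
    have h4 := hC n
    rw [rsX] at h4
    linarith
  constructor
  · refine hθ''sum.congr fun k => ?_
    rw [hceq k]
  · -- α'' converges
    have hSθ : Tendsto (fun n => ∑ j ∈ Finset.range n, rsc η χ M j ω * θ j ω) atTop
        (𝓝 (∑' k, rsc η χ M k ω * θ k ω)) := hθ''sum.hasSum.tendsto_sum_nat
    have hSη : Tendsto (fun n => ∑ j ∈ Finset.range n, rsc η χ M j ω * η j ω) atTop
        (𝓝 (∑' k, rsc η χ M k ω * η k ω)) := hη''sum.hasSum.tendsto_sum_nat
    refine ⟨c - (∑' k, rsc η χ M k ω * θ k ω) + (∑' k, rsc η χ M k ω * η k ω), ?_⟩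
    have : Tendsto (fun n => rsX α θ η χ M n ω
        - ∑ j ∈ Finset.range n, rsc η χ M j ω * θ j ω
        + ∑ j ∈ Finset.range n, rsc η χ M j ω * η j ω) atTop
        (𝓝 (c - (∑' k, rsc η χ M k ω * θ k ω) + (∑' k, rsc η χ M k ω * η k ω))) :=
      (hc.sub hSθ).add hSη
    refine this.congr fun n => ?_
    rw [rsX, hαeq n]
    ring

end

/-- **Robbins–Siegmund lemma.** If nonnegative adapted (integrable) sequences satisfy
`E[α_{k+1} | 𝔉_k] + θ_k ≤ (1 + χ_k) α_k + η_k` a.s. with `Σ η_k < ∞` and `Σ χ_k < ∞` a.s.,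
then `Σ θ_k < ∞` a.s. and `(α_k)` converges a.s. to a nonnegative (random) limit. -/
theorem stmt_10 {Ωs : Type} {m0 : MeasurableSpace Ωs}
    (P : Measure Ωs) [IsProbabilityMeasure P] (ℱ : Filtration ℕ m0)
    (α θ η χ : ℕ → Ωs → ℝ)
    (hα_nonneg : ∀ k ω, 0 ≤ α k ω) (hθ_nonneg : ∀ k ω, 0 ≤ θ k ω)
    (hη_nonneg : ∀ k ω, 0 ≤ η k ω) (hχ_nonneg : ∀ k ω, 0 ≤ χ k ω)
    (hα_adapted : Adapted ℱ α) (hθ_adapted : Adapted ℱ θ)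
    (hη_adapted : Adapted ℱ η) (hχ_adapted : Adapted ℱ χ)
    (hα_int : ∀ k, Integrable (α k) P)
    (hη_sum : ∀ᵐ ω ∂P, Summable fun k => η k ω)
    (hχ_sum : ∀ᵐ ω ∂P, Summable fun k => χ k ω)
    (hrec : ∀ k, ∀ᵐ ω ∂P,
      (P[α (k + 1) | ℱ k]) ω + θ k ω ≤ (1 + χ k ω) * α k ω + η k ω) :
    ∀ᵐ ω ∂P, (Summable fun k => θ k ω) ∧
      ∃ l : ℝ, 0 ≤ l ∧ Tendsto (fun k => α k ω) atTop (nhds l) := by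
  have haux : ∀ M : ℕ, ∀ᵐ ω ∂P,
      (∀ k, ∑ j ∈ Finset.range k, (η j ω + χ j ω) ≤ (M : ℝ)) →
      (Summable fun k => (rsP χ (k + 1) ω)⁻¹ * θ k ω) ∧
      ∃ c, Tendsto (fun k => (rsP χ k ω)⁻¹ * α k ω) atTop (𝓝 c) := fun M =>
    rs_aux hα_nonneg hθ_nonneg hη_nonneg hχ_nonneg hα_adapted hθ_adapted
      hη_adapted hχ_adapted hα_int hrec (M : ℝ) (Nat.cast_nonneg M)
  filter_upwards [hη_sum, hχ_sum, ae_all_iff.2 haux] with ω hηs hχs hAll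
  have hsum : Summable fun k => η k ω + χ k ω := hηs.add hχs
  obtain ⟨M, hM⟩ := exists_nat_ge (∑' k, (η k ω + χ k ω))
  have hA : ∀ k, ∑ j ∈ Finset.range k, (η j ω + χ j ω) ≤ (M : ℝ) := fun k =>
    le_trans (Summable.sum_le_tsum _ (fun j _ => add_nonneg (hη_nonneg j ω) (hχ_nonneg j ω)) hsum) hM
  obtain ⟨hθ', c, hc⟩ := hAll M hA
  have hpmono := rsP_mono hχ_nonneg ω
  have hbdd : ∀ k, rsP χ k ω ≤ Real.exp (∑' j, χ j ω) := fun k => rsP_le_exp hχ_nonneg hχs k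
  have hL : Tendsto (fun k => rsP χ k ω) atTop (𝓝 (⨆ k, rsP χ k ω)) :=
    tendsto_atTop_ciSup hpmono ⟨Real.exp (∑' j, χ j ω), fun x hx => by obtain ⟨k, rfl⟩ := hx; exact hbdd k⟩
  constructor
  · refine Summable.of_nonneg_of_le (fun k => hθ_nonneg k ω) (fun k => ?_)
      (hθ'.mul_left (Real.exp (∑' j, χ j ω)))
    have hp := rsP_pos hχ_nonneg (k + 1) ω
    have heq : θ k ω = rsP χ (k + 1) ω * ((rsP χ (k + 1) ω)⁻¹ * θ k ω) := by
      field_simp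
    exact heq.trans_le <| mul_le_mul_of_nonneg_right (hbdd (k + 1))
      (mul_nonneg (inv_nonneg.2 hp.le) (hθ_nonneg k ω))
  · refine ⟨(⨆ k, rsP χ k ω) * c, ?_, ?_⟩
    · have hc0 : 0 ≤ c := ge_of_tendsto hc (Filter.Eventually.of_forall fun k =>
        mul_nonneg (inv_nonneg.2 (rsP_pos hχ_nonneg k ω).le) (hα_nonneg k ω))
      have hL0 : (0:ℝ) ≤ ⨆ k, rsP χ k ω :=
        le_trans (rsP_pos hχ_nonneg 0 ω).le
          (le_ciSup ⟨Real.exp (∑' j, χ j ω), fun x hx => by obtain ⟨k, rfl⟩ := hx; exact hbdd k⟩ 0)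
      exact mul_nonneg hL0 hc0
    · refine (hL.mul hc).congr fun k => ?_
      rw [← mul_assoc, mul_inv_cancel₀ (rsP_pos hχ_nonneg k ω).ne', one_mul]
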